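/- For every r ≥ 0 and every t > 0, ∫_{ℝ^d} e^{r|ψ|} |K(ψ,t)| dψ ≤ a₁^{d/2} · e^{−b₀ t} · I_{d−1}(νt), where ν := |α|² r² / Re α. -/

import Mathlib

open MeasureTheory

/-- The radial kernel `K(ψ,t) = (4παt)^{-d/2} exp(-δt - |ψ|²/(4αt))`. -/
noncomputable def ouK (d : ℕ) (α δ : ℂ) (ψ : EuclideanSpace ℝ (Fin d)) (t : ℝ) : ℂ :=
  (4 * (Real.pi : ℂ) * α * t) ^ (-(d : ℂ) / 2) *
    Complex.exp (-(δ * t) - ((‖ψ‖ ^ 2 : ℝ) : ℂ) / (4 * α * t))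

/-- `I_m(μ) = (2/Γ(d/2)) ∫_0^∞ s^m e^{-s² + 2√μ s} ds`. -/
noncomputable def ouI (d m : ℕ) (μ : ℝ) : ℝ :=
  (2 / Real.Gamma ((d : ℝ) / 2)) *
    ∫ s in Set.Ioi (0 : ℝ), s ^ m * Real.exp (-s ^ 2 + 2 * Real.sqrt μ * s)

/-- exponentially weighted integral bound for the radial kernel `K`. -/
theorem ouK_exp_weighted_integral_bound
    (d : ℕ) (hd : 1 ≤ d) (α δ : ℂ) (hα : 0 < α.re)
    (r : ℝ) (hr : 0 ≤ r) (t : ℝ) (ht : 0 < t) :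
    (∫ ψ : EuclideanSpace ℝ (Fin d), Real.exp (r * ‖ψ‖) * ‖ouK d α δ ψ t‖)
      ≤ (‖α‖ / α.re) ^ ((d : ℝ) / 2) * Real.exp (-δ.re * t) *
        ouI d (d - 1) ((‖α‖ ^ 2 * r ^ 2 / α.re) * t) := by
  haveI : Nonempty (Fin d) := ⟨⟨0, hd⟩⟩
  haveI : Nontrivial (EuclideanSpace ℝ (Fin d)) := inferInstance
  have hα0 : α ≠ 0 := fun h => by simp [h] at hα
  have hApos : 0 < ‖α‖ := by simpa using hα0
  set A : ℝ := ‖α‖ with hA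
  set β : ℝ := α.re / (4 * A ^ 2 * t) with hβ
  have hβpos : 0 < β := by
    apply div_pos hα
    positivity
  set sβ : ℝ := Real.sqrt β with hsβdef
  have hsβ : 0 < sβ := Real.sqrt_pos.2 hβpos
  set c : ℝ := r / sβ with hc
  set μ : ℝ := (A ^ 2 * r ^ 2 / α.re) * t with hμ
  have hμ0 : 0 ≤ μ := by
    rw [hμ]
    positivity
  -- c = 2 √μ
  have hc2 : c = 2 * Real.sqrt μ := by
    have h1 : 0 ≤ c := by
      rw [hc]; positivity
    have h2 : c ^ 2 = 4 * μ := by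
      rw [hc, div_pow, hsβdef, Real.sq_sqrt hβpos.le, hβ, hμ]
      field_simp
    calc c = Real.sqrt (c ^ 2) := (Real.sqrt_sq h1).symm
      _ = Real.sqrt (2 ^ 2 * μ) := by rw [h2]; norm_num
      _ = 2 * Real.sqrt μ := by
          rw [Real.sqrt_mul (by positivity), Real.sqrt_sq (by norm_num : (0:ℝ) ≤ 2)]
  set e : ℝ := (d : ℝ) / 2 with he
  set C : ℝ := (4 * Real.pi * A * t) ^ (-e) * Real.exp (-δ.re * t) with hC
  set g : ℝ → ℝ := fun ρ => Real.exp (r * ρ - β * ρ ^ 2) with hg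
  -- pointwise identity
  have hpt : ∀ ψ : EuclideanSpace ℝ (Fin d),
      Real.exp (r * ‖ψ‖) * ‖ouK d α δ ψ t‖ = C * g ‖ψ‖ := by
    intro ψ
    have h1 : ‖(4 * (Real.pi : ℂ) * α * t) ^ (-(d : ℂ) / 2)‖
        = (4 * Real.pi * A * t) ^ (-e) := by
      have heq : (-(d : ℂ) / 2) = ((-e : ℝ) : ℂ) := by rw [he]; push_cast; ring
      rw [heq, Complex.norm_cpow_real]
      congr 1
      simp only [norm_mul, Complex.norm_real, Real.norm_eq_abs]
      rw [abs_of_pos Real.pi_pos, abs_of_pos ht]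
      norm_num
      exact Or.inl hA.symm
    have h2 : (-(δ * t) - ((‖ψ‖ ^ 2 : ℝ) : ℂ) / (4 * α * t)).re
        = -δ.re * t - β * ‖ψ‖ ^ 2 := by
      have hinv : ((4 * α * (t : ℂ))⁻¹).re = β := by
        rw [Complex.inv_re, hβ]
        have hns : Complex.normSq (4 * α * t) = (4 * A * t) ^ 2 := by
          rw [Complex.normSq_eq_norm_sq]
          congr 1
          simp only [norm_mul, Complex.norm_real, Real.norm_eq_abs]
          rw [abs_of_pos ht]
          norm_num [hA]
        rw [hns]
        simp only [Complex.mul_re, Complex.mul_im, Complex.ofReal_re, Complex.ofReal_im, Complex.re_ofNat, Complex.im_ofNat]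
        field_simp
        ring
      rw [div_eq_mul_inv, Complex.sub_re, Complex.neg_re, Complex.mul_re, Complex.mul_re]
      simp only [Complex.ofReal_re, Complex.ofReal_im, Complex.mul_im]
      rw [hinv]
      ring_nf
    rw [ouK, norm_mul, h1, Complex.norm_exp, h2, hC, hg]
    simp only []
    rw [Real.exp_sub, Real.exp_sub]
    ring
  set J : ℝ := ∫ s in Set.Ioi (0 : ℝ), s ^ (d - 1) * Real.exp (-s ^ 2 + 2 * Real.sqrt μ * s)
    with hJ
  -- the 1D substitution
  have hsub : (∫ y in Set.Ioi (0 : ℝ), y ^ (d - 1) * g y) = (sβ ^ d)⁻¹ * J := by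
    have key := integral_comp_mul_left_Ioi
      (fun s => s ^ (d - 1) * Real.exp (-s ^ 2 + c * s)) 0 hsβ
    simp only [mul_zero] at key
    have hgx : ∀ x : ℝ, (sβ * x) ^ (d - 1) * Real.exp (-(sβ * x) ^ 2 + c * (sβ * x))
        = sβ ^ (d - 1) * (x ^ (d - 1) * g x) := by
      intro x
      have hb : sβ ^ 2 = β := Real.sq_sqrt hβpos.le
      have hcs : c * sβ = r := div_mul_cancel₀ r hsβ.ne'
      have harg : -(sβ * x) ^ 2 + c * (sβ * x) = r * x - β * x ^ 2 := by
        rw [mul_pow, hb, ← mul_assoc, hcs]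
        ring
      rw [harg, mul_pow, hg]
      ring
    simp only [hgx] at key
    rw [MeasureTheory.integral_const_mul] at key
    have hJc : (∫ s in Set.Ioi (0 : ℝ), s ^ (d - 1) * Real.exp (-s ^ 2 + c * s)) = J := by
      rw [hJ, hc2]
    rw [smul_eq_mul, hJc] at key
    have hne : (sβ : ℝ) ^ (d - 1) ≠ 0 := by positivity
    have : (∫ x in Set.Ioi (0 : ℝ), x ^ (d - 1) * g x)
        = (sβ ^ (d - 1))⁻¹ * (sβ⁻¹ * J) := by
      field_simp at key ⊢
      linarith [key]
    rw [this, ← mul_assoc, ← mul_inv]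
    congr 2
    rw [← pow_succ, Nat.sub_add_cancel hd]
  -- polar coordinates
  have hpolar : (∫ ψ : EuclideanSpace ℝ (Fin d), g ‖ψ‖)
      = (d : ℝ) * ((volume (Metric.ball (0 : EuclideanSpace ℝ (Fin d)) 1)).toReal) *
        ∫ y in Set.Ioi (0 : ℝ), y ^ (d - 1) * g y := by
    rw [integral_fun_norm_addHaar (volume : Measure (EuclideanSpace ℝ (Fin d))) g]
    simp only [finrank_euclideanSpace_fin, nsmul_eq_mul, smul_eq_mul, measureReal_def]
    ring
  -- volume of the unit ball
  have hΓpos : 0 < Real.Gamma e := Real.Gamma_pos_of_pos (by rw [he]; positivity)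
  have hΓ1 : Real.Gamma ((d : ℝ) / 2 + 1) = e * Real.Gamma e := by
    rw [he, Real.Gamma_add_one (by positivity : ((d : ℝ) / 2) ≠ 0)]
  have hvol : (volume (Metric.ball (0 : EuclideanSpace ℝ (Fin d)) 1)).toReal
      = Real.sqrt Real.pi ^ d / Real.Gamma ((d : ℝ) / 2 + 1) := by
    have hΓp : 0 < Real.Gamma ((d : ℝ) / 2 + 1) := by rw [hΓ1]; positivity
    rw [EuclideanSpace.volume_ball]
    simp only [Fintype.card_fin, ENNReal.ofReal_one, one_pow, one_mul]
    rw [ENNReal.toReal_ofReal (div_nonneg (by positivity) hΓp.le)]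
  -- rpow identities
  have hsqpi : Real.sqrt Real.pi ^ d = Real.pi ^ e := by
    rw [Real.sqrt_eq_rpow, ← Real.rpow_natCast (Real.pi ^ (1/2 : ℝ)) d,
      ← Real.rpow_mul Real.pi_pos.le, he]
    congr 1
    ring
  have hsb : sβ ^ d = β ^ e := by
    rw [hsβdef, Real.sqrt_eq_rpow, ← Real.rpow_natCast (β ^ (1/2 : ℝ)) d,
      ← Real.rpow_mul hβpos.le, he]
    congr 1
    ring
  have h4pi : (0:ℝ) < 4 * Real.pi * A * t := by positivity
  have hmain : (4 * Real.pi * A * t) ^ (-e) * Real.pi ^ e * (β ^ e)⁻¹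
      = (A / α.re) ^ e := by
    rw [Real.rpow_neg h4pi.le, ← Real.inv_rpow h4pi.le, ← Real.inv_rpow hβpos.le,
      ← Real.mul_rpow (by positivity) Real.pi_pos.le,
      ← Real.mul_rpow (by positivity) (by positivity)]
    congr 1
    rw [hβ]
    field_simp
  -- assemble
  have hconst : C * ((d : ℝ) * (Real.sqrt Real.pi ^ d / Real.Gamma ((d : ℝ) / 2 + 1)))
      * (sβ ^ d)⁻¹
      = (A / α.re) ^ e * Real.exp (-δ.re * t) * (2 / Real.Gamma e) := by
    have hβe : (0:ℝ) < β ^ e := Real.rpow_pos_of_pos hβpos e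
    have hmain' : (4 * Real.pi * A * t) ^ (-e) * Real.pi ^ e = (A / α.re) ^ e * β ^ e := by
      rw [← hmain]
      field_simp
    rw [hC, hΓ1, hsqpi, hsb]
    have hd2 : (0:ℝ) < e := by rw [he]; positivity
    have hde : (d : ℝ) = 2 * e := by rw [he]; ring
    rw [hde]
    field_simp
    linear_combination hmain'
  calc (∫ ψ : EuclideanSpace ℝ (Fin d), Real.exp (r * ‖ψ‖) * ‖ouK d α δ ψ t‖)
      = ∫ ψ : EuclideanSpace ℝ (Fin d), C * g ‖ψ‖ := by simp only [hpt]
    _ = C * ∫ ψ : EuclideanSpace ℝ (Fin d), g ‖ψ‖ := MeasureTheory.integral_const_mul C _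
    _ = (A / α.re) ^ e * Real.exp (-δ.re * t) * ouI d (d - 1) μ := by
        rw [hpolar, hvol, hsub, ouI]
        linear_combination J * hconst
    _ ≤ _ := le_of_eq rfl
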